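/- Let A : V → W and B : W → V be linear maps between finite-dimensional spaces over a field F with BA nilpotent, x ∈ V, and x' ∈ V* such that ⟨(BA)^m x, x'⟩ ≠ 0 while (BA)^{m+1}x = 0 and (A*B*)^{m+1}x' = 0. Then the (m+1)×(m+1) matrix G with entries G_{ij} = ⟨(BA)^{i-1}x, (A*B*)^{m+1-j}x'⟩ is upper triangular with nonzero diagonal, hence invertible; consequently the vectors (BA)^i x, i = 0,…,m, are linearly independent and their span admits a BA-invariant direct complement in V, namely the annihilator of span{(A*B*)^j x' : j = 0,…,m}. -/

import Mathlib

theorem stmt13 {F V W : Type*} [Field F]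
    [AddCommGroup V] [Module F V] [FiniteDimensional F V]
    [AddCommGroup W] [Module F W]
    (A : V →ₗ[F] W) (B : W →ₗ[F] V) (m : ℕ)
    (hnil : IsNilpotent (B ∘ₗ A : Module.End F V))
    (x : V) (x' : Module.Dual F V)
    (h1 : x' (((B ∘ₗ A : Module.End F V) ^ m) x) ≠ 0)
    (h2 : ((B ∘ₗ A : Module.End F V) ^ (m + 1)) x = 0)
    (h3 : (((B ∘ₗ A : Module.End F V).dualMap :
        Module.End F (Module.Dual F V)) ^ (m + 1)) x' = 0)
    (G : Matrix (Fin (m + 1)) (Fin (m + 1)) F)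
    (hG : ∀ i j : Fin (m + 1), G i j =
      ((((B ∘ₗ A : Module.End F V).dualMap :
          Module.End F (Module.Dual F V)) ^ (m - (j : ℕ))) x')
        (((B ∘ₗ A : Module.End F V) ^ (i : ℕ)) x)) :
    (∀ i j : Fin (m + 1), (j : ℕ) < (i : ℕ) → G i j = 0) ∧
    (∀ i : Fin (m + 1), G i i ≠ 0) ∧
    IsUnit G ∧
    LinearIndependent F
      (fun i : Fin (m + 1) => ((B ∘ₗ A : Module.End F V) ^ (i : ℕ)) x) ∧
    IsCompl
      (Submodule.span F
        (Set.range fun i : Fin (m + 1) => ((B ∘ₗ A : Module.End F V) ^ (i : ℕ)) x))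
      ((Submodule.span F
        (Set.range fun j : Fin (m + 1) =>
          (((B ∘ₗ A : Module.End F V).dualMap :
            Module.End F (Module.Dual F V)) ^ (j : ℕ)) x')).dualCoannihilator) ∧
    ∀ v ∈ (Submodule.span F
        (Set.range fun j : Fin (m + 1) =>
          (((B ∘ₗ A : Module.End F V).dualMap :
            Module.End F (Module.Dual F V)) ^ (j : ℕ)) x')).dualCoannihilator,
      (B ∘ₗ A) v ∈ (Submodule.span F
        (Set.range fun j : Fin (m + 1) =>
          (((B ∘ₗ A : Module.End F V).dualMap :
            Module.End F (Module.Dual F V)) ^ (j : ℕ)) x')).dualCoannihilator := by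
  set T : Module.End F V := B ∘ₗ A with hT
  set D : Module.End F (Module.Dual F V) := T.dualMap with hD
  -- key formula : (D ^ k) f applied to v equals f (T ^ k v)
  have key : ∀ (k : ℕ) (f : Module.Dual F V) (v : V), ((D ^ k) f) v = f ((T ^ k) v) := by
    intro k
    induction k with
    | zero => intro f v; simp
    | succ n ih =>
      intro f v
      have hDn : (D ^ (n + 1)) f = (D ^ n) (D f) := by
        rw [pow_succ, Module.End.mul_apply]
      have hTn : (T ^ (n + 1)) v = (T ^ n) (T v) := by
        rw [pow_succ, Module.End.mul_apply]
      rw [hDn, ih (D f) v, hTn, hD, LinearMap.dualMap_apply]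
      rw [← Module.End.mul_apply, ← Module.End.mul_apply, ← pow_succ', ← pow_succ]
  -- reduce G to the scalar form
  have hG' : ∀ i j : Fin (m + 1), G i j = x' ((T ^ (m - (j : ℕ) + (i : ℕ))) x) := by
    intro i j
    rw [hG i j, key, ← Module.End.mul_apply, ← pow_add]
  -- T ^ k x = 0 for k ≥ m + 1
  have hzero : ∀ k : ℕ, m + 1 ≤ k → (T ^ k) x = 0 := by
    intro k hk
    obtain ⟨l, rfl⟩ := Nat.exists_eq_add_of_le hk
    rw [add_comm, pow_add, Module.End.mul_apply, h2, map_zero]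
  -- part 1 : strictly lower triangular entries vanish
  have part1 : ∀ i j : Fin (m + 1), (j : ℕ) < (i : ℕ) → G i j = 0 := by
    intro i j hij
    rw [hG' i j, hzero _ (by omega), map_zero]
  -- part 2 : diagonal entries are nonzero
  have part2 : ∀ i : Fin (m + 1), G i i ≠ 0 := by
    intro i
    rw [hG' i i]
    have : m - (i : ℕ) + (i : ℕ) = m := by omega
    rw [this]
    exact h1
  -- part 3 : G is invertible
  have hbt : G.BlockTriangular id := by
    intro i j hij
    exact part1 i j hij
  have hdet : G.det ≠ 0 := by
    rw [Matrix.det_of_upperTriangular hbt]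
    exact Finset.prod_ne_zero_iff.mpr fun i _ => part2 i
  have part3 : IsUnit G := by
    rw [Matrix.isUnit_iff_isUnit_det]
    exact isUnit_iff_ne_zero.mpr hdet
  -- part 4 : linear independence of T ^ i x
  have part4 : LinearIndependent F (fun i : Fin (m + 1) => (T ^ (i : ℕ)) x) := by
    rw [Fintype.linearIndependent_iff]
    intro c hc
    have hv : ∀ j : Fin (m + 1), Matrix.vecMul c G j = 0 := by
      intro j
      have := congrArg (fun v => ((D ^ (m - (j : ℕ))) x') v) hc
      simp only [map_sum, map_smul, map_zero, smul_eq_mul] at this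
      calc Matrix.vecMul c G j = ∑ i, c i * G i j := by
            simp [Matrix.vecMul, dotProduct, mul_comm]
        _ = 0 := by
            rw [← this]
            refine Finset.sum_congr rfl fun i _ => ?_
            rw [hG i j]
      -- done
    have hc0 : Matrix.vecMul c G = 0 := funext hv
    have hinj : Function.Injective (fun v => Matrix.vecMul v G) :=
      Matrix.vecMul_injective_iff_isUnit.mpr part3
    have hce : c = 0 := hinj (show Matrix.vecMul c G = Matrix.vecMul 0 G by
      rw [hc0, Matrix.zero_vecMul])
    intro i; rw [hce]; rfl
  -- linear independence of the dual vectors D ^ j x'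
  have part4' : LinearIndependent F (fun j : Fin (m + 1) => (D ^ (j : ℕ)) x') := by
    rw [Fintype.linearIndependent_iff]
    intro d hd
    -- mulVec : for each i, ∑ j G i (rev j) * d j = 0
    have hv : ∀ i : Fin (m + 1), Matrix.mulVec G (fun j => d j.rev) i = 0 := by
      intro i
      have := congrArg (fun f : Module.Dual F V => f ((T ^ (i : ℕ)) x)) hd
      simp only [LinearMap.coe_sum, Finset.sum_apply, LinearMap.smul_apply,
        smul_eq_mul, LinearMap.zero_apply] at this
      calc Matrix.mulVec G (fun j => d j.rev) i
          = ∑ j, G i j * d j.rev := by simp [Matrix.mulVec, dotProduct]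
        _ = ∑ j : Fin (m + 1), G i j.rev * d j :=
            (Fintype.sum_equiv (Fin.revPerm) (fun j => G i j.rev * d j)
              (fun j => G i j * d j.rev) (fun j => by simp [Fin.rev_rev])).symm
        _ = ∑ j : Fin (m + 1), d j * ((D ^ (j : ℕ)) x') ((T ^ (i : ℕ)) x) := by
            refine Finset.sum_congr rfl fun j _ => ?_
            rw [hG' i j.rev, key]
            have : m - ((j.rev : ℕ)) + (i : ℕ) = (j : ℕ) + (i : ℕ) := by
              have := j.is_lt
              simp [Fin.rev]
              omega
            rw [this, mul_comm, pow_add, Module.End.mul_apply]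
        _ = 0 := this
    have hd0 : Matrix.mulVec G (fun j => d j.rev) = 0 := funext hv
    have hinj : Function.Injective (fun v => Matrix.mulVec G v) :=
      Matrix.mulVec_injective_iff_isUnit.mpr part3
    have hall : (fun j : Fin (m + 1) => d j.rev) = 0 := hinj
      (show Matrix.mulVec G _ = Matrix.mulVec G 0 by rw [hd0, Matrix.mulVec_zero])
    intro i
    have := congrFun hall i.rev
    simpa [Fin.rev_rev] using this
  set S := Submodule.span F (Set.range fun i : Fin (m + 1) => (T ^ (i : ℕ)) x) with hS
  set Φ := Submodule.span F (Set.range fun j : Fin (m + 1) => (D ^ (j : ℕ)) x') with hΦ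
  -- generators of Φ lie in Φ
  have hgenΦ : ∀ k : ℕ, k ≤ m → (D ^ k) x' ∈ Φ := by
    intro k hk
    exact Submodule.subset_span ⟨⟨k, by omega⟩, rfl⟩
  -- disjointness
  have hdisj : Disjoint S Φ.dualCoannihilator := by
    rw [Submodule.disjoint_def]
    intro v hvS hvA
    rw [hS, Submodule.mem_span_range_iff_exists_fun] at hvS
    obtain ⟨c, hc⟩ := hvS
    have hcv : ∀ j : Fin (m + 1), Matrix.vecMul c G j = 0 := by
      intro j
      have hf : (D ^ (m - (j : ℕ))) x' ∈ Φ := hgenΦ _ (by omega)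
      have h0 : ((D ^ (m - (j : ℕ))) x') v = 0 :=
        (Submodule.mem_dualCoannihilator v).mp hvA _ hf
      calc Matrix.vecMul c G j = ∑ i, c i * G i j := by
            simp [Matrix.vecMul, dotProduct, mul_comm]
        _ = ((D ^ (m - (j : ℕ))) x') v := by
            rw [← hc, map_sum]
            refine Finset.sum_congr rfl fun i _ => ?_
            rw [map_smul, hG i j, smul_eq_mul]
        _ = 0 := h0
    have hc0 : Matrix.vecMul c G = 0 := funext hcv
    have hinj : Function.Injective (fun u => Matrix.vecMul u G) :=
      Matrix.vecMul_injective_iff_isUnit.mpr part3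
    have hce : c = 0 := hinj (show Matrix.vecMul c G = Matrix.vecMul 0 G by
      rw [hc0, Matrix.zero_vecMul])
    rw [← hc]
    exact Finset.sum_eq_zero fun i _ => by simp [congrFun hce i]
  -- dimensions
  have hdimS : Module.finrank F S = m + 1 := by
    rw [hS, finrank_span_eq_card part4]
    simp
  have hdimΦ : Module.finrank F Φ = m + 1 := by
    rw [hΦ, finrank_span_eq_card part4']
    simp
  have hdimA : Module.finrank F Φ + Module.finrank F Φ.dualCoannihilator
      = Module.finrank F V := Subspace.finrank_add_finrank_dualCoannihilator_eq Φ
  have hsum : Module.finrank F S + Module.finrank F Φ.dualCoannihilator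
      = Module.finrank F V := by
    rw [hdimS, ← hdimΦ] at *
    omega
  have part5 : IsCompl S Φ.dualCoannihilator := by
    refine ⟨hdisj, ?_⟩
    rw [codisjoint_iff]
    exact Submodule.eq_top_of_disjoint _ _ hsum.ge hdisj
  -- invariance
  have hinv : ∀ f ∈ Φ, D f ∈ Φ := by
    intro f hf
    induction hf using Submodule.span_induction with
    | mem g hg =>
      obtain ⟨j, rfl⟩ := hg
      by_cases hj : (j : ℕ) < m
      · have : D ((D ^ (j : ℕ)) x') = (D ^ ((j : ℕ) + 1)) x' := by
          rw [pow_succ', Module.End.mul_apply]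
        rw [this]
        exact hgenΦ _ (by omega)
      · have hjm : (j : ℕ) = m := by omega
        have : D ((D ^ (j : ℕ)) x') = (D ^ (m + 1)) x' := by
          rw [hjm, pow_succ', Module.End.mul_apply]
        rw [this, h3]
        exact Submodule.zero_mem Φ
    | zero => rw [map_zero]; exact Submodule.zero_mem Φ
    | add a b _ _ ha hb => rw [map_add]; exact Submodule.add_mem Φ ha hb
    | smul r a _ ha => rw [map_smul]; exact Submodule.smul_mem Φ r ha
  refine ⟨part1, part2, part3, part4, part5, ?_⟩
  intro v hv
  rw [Submodule.mem_dualCoannihilator] at hv ⊢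
  intro f hf
  have : f ((B ∘ₗ A) v) = (D f) v := rfl
  rw [this]
  exact hv (D f) (hinv f hf)
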